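/- Let z1, z2 be linearly independent vectors in EuclideanSpace ℝ (Fin 2) and set z3 = -z1 - z2. Then the symmetric real 3×3 matrix G = ![![2‖z1‖², -⟪z1, z2⟫, -⟪z1, z3⟫], ![-⟪z1, z2⟫, 2‖z2‖², -⟪z2, z3⟫], ![-⟪z1, z3⟫, -⟪z2, z3⟫, 2‖z3‖²]] is positive definite, i.e., xᵀGx > 0 for every nonzero x ∈ ℝ³. -/

import Mathlib

open Matrix
open scoped InnerProductSpace

theorem stmt_10 (z1 z2 z3 : EuclideanSpace ℝ (Fin 2))
    (hind : LinearIndependent ℝ ![z1, z2])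
    (hz3 : z3 = -z1 - z2)
    (G : Matrix (Fin 3) (Fin 3) ℝ)
    (hG : G = !![2 * ‖z1‖ ^ 2, -⟪z1, z2⟫_ℝ, -⟪z1, z3⟫_ℝ;
                 -⟪z1, z2⟫_ℝ, 2 * ‖z2‖ ^ 2, -⟪z2, z3⟫_ℝ;
                 -⟪z1, z3⟫_ℝ, -⟪z2, z3⟫_ℝ, 2 * ‖z3‖ ^ 2]) :
    ∀ x : Fin 3 → ℝ, x ≠ 0 → 0 < x ⬝ᵥ (G *ᵥ x) := by
  intro x hx
  set a : EuclideanSpace ℝ (Fin 2) := x 0 • z1 - x 2 • z3 with ha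
  set b : EuclideanSpace ℝ (Fin 2) := x 1 • z2 - x 0 • z1 with hb
  set c : EuclideanSpace ℝ (Fin 2) := x 2 • z3 - x 1 • z2 with hc
  have key : x ⬝ᵥ (G *ᵥ x) = ‖a‖ ^ 2 + ‖b‖ ^ 2 + ‖c‖ ^ 2 := by
    rw [ha, hb, hc, @norm_sub_sq_real (EuclideanSpace ℝ (Fin 2)),
      @norm_sub_sq_real (EuclideanSpace ℝ (Fin 2)), @norm_sub_sq_real (EuclideanSpace ℝ (Fin 2))]
    simp [hG, Matrix.mulVec, dotProduct, Fin.sum_univ_three, norm_smul,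
      real_inner_smul_left, real_inner_smul_right, mul_pow]
    rw [real_inner_comm z2 z1, real_inner_comm z3 z2]
    ring
  rw [key]
  -- z3 ≠ 0
  have hli := Fintype.linearIndependent_iff.mp hind
  have hz3ne : z3 ≠ 0 := by
    intro h
    have hsum : (1 : ℝ) • z1 + (1 : ℝ) • z2 = 0 := by
      have h2 : -z1 - z2 = 0 := hz3 ▸ h
      simp only [one_smul]
      linear_combination (norm := module) -h2
    have := hli ![1, 1] (by simpa [Fin.sum_univ_two] using hsum) 0
    simp at this
  by_cases hbz : b = 0
  · -- then x 0 = x 1 = 0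
    have hsum : (x 0) • z1 + (-(x 1)) • z2 = 0 := by
      have : x 0 • z1 - x 1 • z2 = 0 := by
        rw [hb, sub_eq_zero] at hbz
        rw [sub_eq_zero, hbz]
      simpa [neg_smul, sub_eq_add_neg] using this
    have h01 := hli ![x 0, -(x 1)] (by simpa [Fin.sum_univ_two] using hsum)
    have hx0 : x 0 = 0 := h01 0
    have hx1 : x 1 = 0 := by have := h01 1; simpa using this
    have hx2 : x 2 ≠ 0 := by
      intro h2
      apply hx
      funext i
      fin_cases i <;> simp [hx0, hx1, h2]
    have hane : a ≠ 0 := by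
      rw [ha, hx0, zero_smul, zero_sub, neg_ne_zero]
      exact smul_ne_zero hx2 hz3ne
    have h1 : 0 < ‖a‖ ^ 2 := pow_pos (norm_pos_iff.mpr hane) 2
    have h2 : 0 ≤ ‖b‖ ^ 2 := by positivity
    have h3 : 0 ≤ ‖c‖ ^ 2 := by positivity
    linarith
  · have h1 : 0 ≤ ‖a‖ ^ 2 := by positivity
    have h2 : 0 < ‖b‖ ^ 2 := pow_pos (norm_pos_iff.mpr hbz) 2
    have h3 : 0 ≤ ‖c‖ ^ 2 := by positivity
    linarith
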